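/- arXiv:2507.11855 — 2 statements merged into one kernel-verified Lean document; each statement's English description precedes it below -/
import Mathlib

section
/- Let N = {1,...,d} and suppose players i, j ∈ N are symmetric for a function ω on ordered coalitions, meaning ω(π with i inserted at position k) = ω(π with j inserted at position k) for all S ⊆ N\{i,j}, all orderings π of S, and all positions k. If additionally ω is invariant under swapping i and j within any ordering containing both, then φ^SB_i(ω) = φ^SB_j(ω). -/
open Finset Nat

/-- The set of orderings of a finite set `S`: lists that enumerate `S` without repetition. -/
def Orderings (S : Finset ℕ) : Finset (List ℕ) := (S.sort (· ≤ ·)).permutations.toFinset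

noncomputable def SBvalue (d : ℕ) (ω : List ℕ → ℝ) (i : ℕ) : ℝ :=
  ∑ S ∈ ((Finset.Icc 1 d).erase i).powerset, ∑ π ∈ Orderings S,
    ∑ k ∈ Finset.Icc 1 (S.card + 1),
      (((d - S.card - 1)! : ℝ) / (d ! * (S.card + 1))) * (ω (π.insertIdx (k - 1) i) - ω π)

lemma map_insertIdx' (f : ℕ → ℕ) (a : ℕ) :
    ∀ (n : ℕ) (l : List ℕ), n ≤ l.length →
      (l.insertIdx n a).map f = (l.map f).insertIdx n (f a)
  | 0, l, _ => rfl
  | n+1, [], h => by simp at h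
  | n+1, b :: l, h => by
    simp [List.insertIdx_succ_cons, map_insertIdx' f a n l (Nat.le_of_succ_le_succ h)]

lemma perm_of_nodup' (l₁ l₂ : List ℕ) (h₁ : l₁.Nodup) (h₂ : l₂.Nodup)
    (h : l₁.toFinset = l₂.toFinset) : l₁.Perm l₂ :=
  (h₁.subperm fun _ ha => List.mem_toFinset.1 (h ▸ List.mem_toFinset.2 ha)).antisymm
    (h₂.subperm fun _ ha => List.mem_toFinset.1 (h ▸ List.mem_toFinset.2 ha))

lemma mem_Orderings' {S : Finset ℕ} {π : List ℕ} :
    π ∈ Orderings S ↔ π.Nodup ∧ π.toFinset = S := by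
  simp only [Orderings, List.mem_toFinset, List.mem_permutations]
  constructor
  · intro h
    refine ⟨h.nodup_iff.2 (Finset.sort_nodup S _), ?_⟩
    rw [List.toFinset_eq_of_perm _ _ h, Finset.sort_toFinset]
  · rintro ⟨hnd, rfl⟩
    exact perm_of_nodup' _ _ hnd (Finset.sort_nodup _ _) (by rw [Finset.sort_toFinset])

lemma insertIdx_erase' (j : ℕ) : ∀ (π : List ℕ), j ∈ π →
    (π.erase j).insertIdx (π.idxOf j) j = π
  | a :: l, h => by
    by_cases hj : a = j
    · subst hj; simp
    · rw [List.erase_cons_tail (by simpa using hj),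
        List.idxOf_cons_ne _ (by simpa using hj)]
      simp [List.insertIdx_succ_cons,
        insertIdx_erase' j l (by cases h with | head => exact absurd rfl hj | tail _ h => exact h)]

lemma nodup_mem_erase' {l : List ℕ} (h : l.Nodup) {j a : ℕ} :
    a ∈ l.erase j ↔ ¬a = j ∧ a ∈ l := by
  rw [h.erase_eq_filter, List.mem_filter]
  constructor
  · rintro ⟨h1, h2⟩; exact ⟨by simpa using h2, h1⟩
  · rintro ⟨h1, h2⟩; exact ⟨h2, by simpa using h1⟩

lemma toFinset_map' (l : List ℕ) (f : ℕ → ℕ) :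
    (l.map f).toFinset = l.toFinset.image f := by ext a; simp

/-- Symmetric players have equal SB values. -/
theorem stmt8 (d i j : ℕ) (ω : List ℕ → ℝ)
    (hi : i ∈ Finset.Icc 1 d) (hj : j ∈ Finset.Icc 1 d) (hij : i ≠ j)
    (hsym : ∀ S ⊆ ((Finset.Icc 1 d).erase i).erase j, ∀ π ∈ Orderings S,
      ∀ k ∈ Finset.Icc 1 (S.card + 1),
        ω (π.insertIdx (k - 1) i) = ω (π.insertIdx (k - 1) j))
    (hswap : ∀ π : List ℕ, i ∈ π → j ∈ π →
      ω (π.map (fun a => if a = i then j else if a = j then i else a)) = ω π) :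
    SBvalue d ω i = SBvalue d ω j := by
  classical
  set σ : ℕ → ℕ := fun a => if a = i then j else if a = j then i else a with hσ
  have hσi : σ i = j := by simp [hσ]
  have hσj : σ j = i := by simp [hσ, Ne.symm hij]
  have hfix : ∀ a, a ≠ i → a ≠ j → σ a = a := fun a h1 h2 => by
    simp only [hσ]; rw [if_neg h1, if_neg h2]
  have hσσ : ∀ a, σ (σ a) = a := by
    intro a
    by_cases h1 : a = i
    · rw [h1, hσi, hσj]
    · by_cases h2 : a = j
      · rw [h2, hσj, hσi]
      · rw [hfix a h1 h2, hfix a h1 h2]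
  have hinj : Function.Injective σ := Function.Involutive.injective hσσ
  have mapfix : ∀ l : List ℕ, i ∉ l → j ∉ l → l.map σ = l := by
    intro l h1 h2
    rw [show l.map σ = l.map id from
      List.map_congr_left fun a ha => hfix a (fun h => h1 (h ▸ ha)) (fun h => h2 (h ▸ ha)),
      List.map_id]
  have himg : ∀ S : Finset ℕ, (S.image σ).image σ = S := by
    intro S
    rw [Finset.image_image, show σ ∘ σ = id from funext hσσ, Finset.image_id]
  have hmapmap : ∀ l : List ℕ, (l.map σ).map σ = l := by
    intro l; rw [List.map_map, show σ ∘ σ = id from funext hσσ, List.map_id]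
  unfold SBvalue
  refine Finset.sum_nbij' (fun S => S.image σ) (fun S => S.image σ) ?_ ?_
    (fun S _ => himg S) (fun S _ => himg S) ?_
  · intro S hS
    rw [Finset.mem_powerset] at hS ⊢
    intro a ha
    obtain ⟨b, hb, rfl⟩ := Finset.mem_image.1 ha
    have hb' := Finset.mem_erase.1 (hS hb)
    rw [Finset.mem_erase]
    by_cases hbj : b = j
    · subst hbj; rw [hσj]; exact ⟨hij, hi⟩
    · rw [hfix b hb'.1 hbj]; exact ⟨hbj, hb'.2⟩
  · intro S hS
    rw [Finset.mem_powerset] at hS ⊢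
    intro a ha
    obtain ⟨b, hb, rfl⟩ := Finset.mem_image.1 ha
    have hb' := Finset.mem_erase.1 (hS hb)
    rw [Finset.mem_erase]
    by_cases hbi : b = i
    · subst hbi; rw [hσi]; exact ⟨Ne.symm hij, hj⟩
    · rw [hfix b hbi hb'.1]; exact ⟨hbi, hb'.2⟩
  · intro S hS
    have hSsub : S ⊆ (Finset.Icc 1 d).erase i := Finset.mem_powerset.1 hS
    have hcard : (S.image σ).card = S.card := Finset.card_image_of_injective S hinj
    refine Finset.sum_nbij' (fun π => π.map σ) (fun π => π.map σ) ?_ ?_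
      (fun π _ => hmapmap π) (fun π _ => hmapmap π) ?_
    · intro π hπ
      obtain ⟨hnd, hts⟩ := mem_Orderings'.1 hπ
      exact mem_Orderings'.2 ⟨hnd.map hinj, by rw [toFinset_map', hts]⟩
    · intro π hπ
      obtain ⟨hnd, hts⟩ := mem_Orderings'.1 hπ
      exact mem_Orderings'.2 ⟨hnd.map hinj, by rw [toFinset_map', hts, himg]⟩
    · intro π hπ
      obtain ⟨hnd, hts⟩ := mem_Orderings'.1 hπ
      rw [hcard]
      refine Finset.sum_congr rfl fun k hk => ?_
      have hk' := Finset.mem_Icc.1 hk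
      have hiπ : i ∉ π := fun h =>
        (Finset.mem_erase.1 (hSsub (hts ▸ List.mem_toFinset.2 h))).1 rfl
      have hlen : π.length = S.card := by
        rw [← hts, List.toFinset_card_of_nodup hnd]
      have hk1 : k - 1 ≤ π.length := by omega
      have hins : (π.map σ).insertIdx (k-1) j = (π.insertIdx (k-1) i).map σ := by
        rw [map_insertIdx' σ i (k-1) π hk1, hσi]
      rw [hins]
      by_cases hjπ : j ∈ π
      · have h1 : ω ((π.insertIdx (k-1) i).map σ) = ω (π.insertIdx (k-1) i) :=
          hswap _ ((List.mem_insertIdx hk1).2 (Or.inl rfl))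
            ((List.mem_insertIdx hk1).2 (Or.inr hjπ))
        have h2 : ω (π.map σ) = ω π := by
          have hnlt : π.idxOf j < π.length := List.idxOf_lt_length_iff.2 hjπ
          have hτlen : (π.erase j).length + 1 = π.length := List.length_erase_add_one hjπ
          have hnτ : π.idxOf j ≤ (π.erase j).length := by omega
          have hiτ : i ∉ π.erase j := fun h => hiπ (List.mem_of_mem_erase h)
          have hjτ : j ∉ π.erase j := fun h => ((nodup_mem_erase' hnd).1 h).1 rfl
          have hπeq : (π.erase j).insertIdx (π.idxOf j) j = π := insertIdx_erase' j π hjπ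
          have hmap : π.map σ = (π.erase j).insertIdx (π.idxOf j) i := by
            conv_lhs => rw [← hπeq]
            rw [map_insertIdx' σ j _ _ hnτ, hσj, mapfix _ hiτ hjτ]
          have hτnd : (π.erase j).Nodup := hnd.erase j
          have hτts : (π.erase j).toFinset = S.erase j := by
            ext a
            rw [List.mem_toFinset, nodup_mem_erase' hnd, Finset.mem_erase, ← hts,
              List.mem_toFinset]
          have hτcard : (S.erase j).card = (π.erase j).length := by
            rw [← hτts, List.toFinset_card_of_nodup hτnd]
          have hsub : S.erase j ⊆ ((Finset.Icc 1 d).erase i).erase j := by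
            intro a ha
            have ha' := Finset.mem_erase.1 ha
            exact Finset.mem_erase.2 ⟨ha'.1, hSsub ha'.2⟩
          have hkm : π.idxOf j + 1 ∈ Finset.Icc 1 ((S.erase j).card + 1) := by
            rw [Finset.mem_Icc, hτcard]; omega
          have := hsym (S.erase j) hsub (π.erase j)
            (mem_Orderings'.2 ⟨hτnd, hτts⟩) (π.idxOf j + 1) hkm
          simp only [Nat.add_sub_cancel] at this
          rw [hmap, this, hπeq]
        rw [h1, h2]
      · have hjS : j ∉ S := by
          intro h; rw [← hts, List.mem_toFinset] at h; exact hjπ h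
        have hmap : π.map σ = π := mapfix π hiπ hjπ
        have hsub : S ⊆ ((Finset.Icc 1 d).erase i).erase j := fun a ha =>
          Finset.mem_erase.2 ⟨fun h => hjS (h ▸ ha), hSsub ha⟩
        have := hsym S hsub π hπ k hk
        have e1 : ω (List.map σ (List.insertIdx π (k-1) i)) = ω (List.insertIdx π (k-1) i) := by
          rw [← hins, hmap, ← this]
        have e2 : ω (List.map σ π) = ω π := by rw [hmap]
        rw [e1, e2]
end

section
/- Let N = {1,...,d}, fix i ∈ N, and let ω : P(N) × Sym(N) → ℝ. Define γ̄_i(ω) = Σ_{S ⊆ N, i ∈ S} Σ_{σ ∈ Sym(N)} [(|S|−1)!(d−|S|)!/(d!·d!)]·[ω(S,σ) − ω(S\{i},σ)]. If ω(S,σ) depends on σ only through the relative order it induces on S (i.e., ω(S,σ) = ω(S,σ') whenever σ and σ' induce the same relative ordering of S), then γ̄_i(ω) = Σ_{S ⊆ N\{i}} Σ_{π ∈ Ord(S∪{i})} [(d−|S|−1)!/(d!(|S|+1))]·[ω̃(π) − ω̃(π with i removed)], where ω̃(π) is the common value of ω(T, σ) over all σ ∈ Sym(N) inducing π on T = underlying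 set of π. -/
open Finset Nat

/-- A canonical extension of an ordering `π` of a subset of `{1,…,d}` to an ordering
of all of `{1,…,d}`, obtained by appending the remaining elements in increasing order. -/
def extendOrd (d : ℕ) (π : List ℕ) : List ℕ :=
  π ++ ((Finset.Icc 1 d \ π.toFinset).sort (· ≤ ·))

lemma mem_orderings {S : Finset ℕ} {l : List ℕ} :
    l ∈ Orderings S ↔ l.Nodup ∧ l.toFinset = S := by
  unfold Orderings
  rw [List.mem_toFinset, List.mem_permutations]
  constructor
  · intro h
    exact ⟨h.nodup_iff.2 (S.sort_nodup _),
      by rw [List.toFinset_eq_of_perm _ _ h, Finset.sort_toFinset]⟩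
  · rintro ⟨h1, h2⟩
    exact List.perm_of_nodup_nodup_toFinset_eq h1 (S.sort_nodup _)
      (by rw [h2, Finset.sort_toFinset])

lemma card_orderings (S : Finset ℕ) : (Orderings S).card = S.card ! := by
  unfold Orderings
  rw [List.toFinset_card_of_nodup (List.nodup_permutations _ (S.sort_nodup _)),
    List.length_permutations, Finset.length_sort]

lemma extendOrd_mem {d : ℕ} {π : List ℕ} (h1 : π.Nodup) (h2 : π.toFinset ⊆ Finset.Icc 1 d) :
    extendOrd d π ∈ Orderings (Finset.Icc 1 d) := by
  rw [mem_orderings]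
  constructor
  · rw [extendOrd, List.nodup_append]
    refine ⟨h1, Finset.sort_nodup _ _, ?_⟩
    intro a ha b hb hab
    have := Finset.mem_sort (α := ℕ) (· ≤ ·) |>.1 hb
    simp only [Finset.mem_sdiff] at this
    exact this.2 (List.mem_toFinset.2 (hab ▸ ha))
  · rw [extendOrd, List.toFinset_append, Finset.sort_toFinset]
    rw [Finset.union_sdiff_of_subset h2]

lemma extendOrd_filter {d : ℕ} (π : List ℕ) :
    (extendOrd d π).filter (fun a => decide (a ∈ π.toFinset)) = π := by
  rw [extendOrd, List.filter_append]
  have e1 : π.filter (fun a => decide (a ∈ π.toFinset)) = π := by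
    apply List.filter_eq_self.2
    intro a ha; simpa using ha
  have e2 : (((Finset.Icc 1 d \ π.toFinset).sort (· ≤ ·)).filter
      (fun a => decide (a ∈ π.toFinset))) = [] := by
    apply List.filter_eq_nil_iff.2
    intro a ha
    have := Finset.mem_sort (α := ℕ) (· ≤ ·) |>.1 ha
    simp only [Finset.mem_sdiff] at this
    simpa using this.2
  rw [e1, e2, List.append_nil]

def swapFun (π π' : List ℕ) (x : ℕ) : ℕ := if x ∈ π then π'.getD (π.idxOf x) 0 else x

section swap
variable {π π' : List ℕ} (hn : π.Nodup) (hn' : π'.Nodup) (hft : π.toFinset = π'.toFinset)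

include hn hn' hft

lemma swap_len : π.length = π'.length := by
  rw [← List.toFinset_card_of_nodup hn, ← List.toFinset_card_of_nodup hn', hft]

lemma swap_mem {x : ℕ} (hx : x ∈ π) : swapFun π π' x ∈ π' := by
  have hlt : π.idxOf x < π'.length := by
    rw [← swap_len hn hn' hft]; exact List.idxOf_lt_length_iff.2 hx
  rw [swapFun, if_pos hx, List.getD_eq_getElem _ _ hlt]
  exact List.getElem_mem _

omit hn hn' hft in
lemma swap_not_mem {x : ℕ} (hx : x ∉ π) : swapFun π π' x = x := if_neg hx

lemma swap_swap (x : ℕ) : swapFun π' π (swapFun π π' x) = x := by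
  by_cases hx : x ∈ π
  · have hlt : π.idxOf x < π.length := List.idxOf_lt_length_iff.2 hx
    have hlt' : π.idxOf x < π'.length := by rw [← swap_len hn hn' hft]; exact hlt
    have hmem : swapFun π π' x ∈ π' := swap_mem hn hn' hft hx
    rw [swapFun, if_pos hmem, swapFun, if_pos hx]
    have h1 : π'.idxOf (π'.getD (π.idxOf x) 0) = π.idxOf x := by
      rw [List.getD_eq_getElem _ _ hlt', List.Nodup.idxOf_getElem hn' _ _]
    rw [h1, List.getD_eq_getElem _ _ hlt]
    exact List.getElem_idxOf hlt
  · have hx' : x ∉ π' := by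
      intro h; apply hx
      rw [← List.mem_toFinset, hft, List.mem_toFinset]; exact h
    rw [swap_not_mem hx, swap_not_mem hx']

lemma swap_map : π.map (swapFun π π') = π' := by
  apply List.ext_getElem
  · rw [List.length_map]; exact swap_len hn hn' hft
  · intro n h1 h2
    simp only [List.length_map] at h1
    rw [List.getElem_map]
    have hmem : π[n] ∈ π := List.getElem_mem _
    rw [swapFun, if_pos hmem, List.Nodup.idxOf_getElem hn _ _, List.getD_eq_getElem _ _ h2]

lemma swap_mem_iff (T : Finset ℕ) (hT : π.toFinset = T) (x : ℕ) :
    swapFun π π' x ∈ T ↔ x ∈ T := by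
  by_cases hx : x ∈ π
  · have h1 : x ∈ T := hT ▸ List.mem_toFinset.2 hx
    have h2 : swapFun π π' x ∈ T := by
      have := swap_mem hn hn' hft hx
      rw [← hT, hft]
      exact List.mem_toFinset.2 this
    simp [h1, h2]
  · rw [swap_not_mem hx]

end swap

lemma fiber_card_eq {N T : Finset ℕ} (hTN : T ⊆ N) {π π' : List ℕ}
    (hπn : π.Nodup) (hπ'n : π'.Nodup) (hπT : π.toFinset = T) (hπ'T : π'.toFinset = T) :
    ((Orderings N).filter (fun σ => σ.filter (fun a => decide (a ∈ T)) = π)).card =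
    ((Orderings N).filter (fun σ => σ.filter (fun a => decide (a ∈ T)) = π')).card := by
  have hft : π.toFinset = π'.toFinset := by rw [hπT, hπ'T]
  have main : ∀ (ρ ρ' : List ℕ), ρ.Nodup → ρ'.Nodup → ρ.toFinset = T → ρ'.toFinset = T →
      ∀ σ ∈ (Orderings N).filter (fun σ => σ.filter (fun a => decide (a ∈ T)) = ρ),
      σ.map (swapFun ρ ρ') ∈
        (Orderings N).filter (fun σ => σ.filter (fun a => decide (a ∈ T)) = ρ') := by
    intro ρ ρ' hρ hρ' hρT hρ'T σ hσ
    have hft2 : ρ.toFinset = ρ'.toFinset := by rw [hρT, hρ'T]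
    set g := swapFun ρ ρ' with hg
    have hinv : ∀ x, swapFun ρ' ρ (g x) = x := swap_swap hρ hρ' hft2
    have ginj : Function.Injective g := fun a b hab => by
      have := hinv a; rw [hab, hinv b] at this; exact this.symm
    simp only [Finset.mem_filter] at hσ ⊢
    obtain ⟨hσO, hσf⟩ := hσ
    rw [mem_orderings] at hσO ⊢
    obtain ⟨hσn, hσt⟩ := hσO
    refine ⟨⟨hσn.map ginj, ?_⟩, ?_⟩
    · have hmapt : (List.map g σ).toFinset = σ.toFinset.image g := by
        ext x; simp [List.mem_map, Finset.mem_image]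
      rw [hmapt, hσt]
      have himg : N.image g ⊆ N := by
        intro y hy
        rw [Finset.mem_image] at hy
        obtain ⟨x, _, rfl⟩ := hy
        by_cases hx : x ∈ ρ
        · exact hTN (hρ'T ▸ List.mem_toFinset.2 (swap_mem hρ hρ' hft2 hx))
        · rwa [hg, swap_not_mem hx]
      exact Finset.eq_of_subset_of_card_le himg
        (le_of_eq (Finset.card_image_of_injective _ ginj).symm)
    · rw [List.filter_map]
      have hpg : ((fun a => decide (a ∈ T)) ∘ g) = (fun a => decide (a ∈ T)) := by
        funext x
        simp only [Function.comp_apply, decide_eq_decide]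
        exact swap_mem_iff hρ hρ' hft2 T hρT x
      rw [hpg, hσf, hg, swap_map hρ hρ' hft2]
  refine Finset.card_bij' (fun σ _ => σ.map (swapFun π π')) (fun σ _ => σ.map (swapFun π' π))
    (main π π' hπn hπ'n hπT hπ'T) (main π' π hπ'n hπn hπ'T hπT) ?_ ?_
  · intro σ hσ
    simp only [List.map_map]
    have : (swapFun π' π ∘ swapFun π π') = id := funext (swap_swap hπn hπ'n hft)
    rw [this, List.map_id]
  · intro σ hσ
    simp only [List.map_map]
    have : (swapFun π π' ∘ swapFun π' π) = id := funext (swap_swap hπ'n hπn hft.symm)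
    rw [this, List.map_id]

lemma filter_maps_to {N T : Finset ℕ} (hTN : T ⊆ N) :
    ∀ σ ∈ Orderings N, σ.filter (fun a => decide (a ∈ T)) ∈ Orderings T := by
  intro σ hσ
  rw [mem_orderings] at hσ ⊢
  refine ⟨hσ.1.filter _, ?_⟩
  ext x
  simp only [List.mem_toFinset, List.mem_filter, decide_eq_true_eq]
  constructor
  · exact fun h => h.2
  · intro h
    exact ⟨List.mem_toFinset.1 (hσ.2 ▸ hTN h), h⟩

lemma fiber_count {N T : Finset ℕ} (hTN : T ⊆ N) {π : List ℕ} (hπ : π ∈ Orderings T) :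
    ((Orderings N).filter (fun σ => σ.filter (fun a => decide (a ∈ T)) = π)).card
      * T.card ! = N.card ! := by
  have h1 := Finset.card_eq_sum_card_fiberwise (filter_maps_to hTN)
  rw [card_orderings] at h1
  rw [mem_orderings] at hπ
  have h2 : ∀ π' ∈ Orderings T,
      ((Orderings N).filter (fun σ => σ.filter (fun a => decide (a ∈ T)) = π')).card =
      ((Orderings N).filter (fun σ => σ.filter (fun a => decide (a ∈ T)) = π)).card := by
    intro π' hπ'
    rw [mem_orderings] at hπ'
    exact fiber_card_eq hTN hπ'.1 hπ.1 hπ'.2 hπ.2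
  rw [Finset.sum_congr rfl h2, Finset.sum_const, card_orderings, smul_eq_mul] at h1
  rw [mul_comm]
  exact h1.symm

/-- OrdShap-VI equals the SB-type sum: if `ω(S,σ)` depends on `σ` only through the
relative order induced on `S`, then
`γ̄_i(ω) = Σ_{S ⊆ N\{i}} Σ_{π ∈ Ord(S∪{i})} (d−|S|−1)!/(d!(|S|+1)) · [ω̃(π) − ω̃(π − i)]`,
where `ω̃(π)` is the common value of `ω` on the underlying set of `π` and any
permutation of `N` inducing `π`. -/
theorem stmt12 (d i : ℕ) (ω : Finset ℕ → List ℕ → ℝ) (hi : i ∈ Finset.Icc 1 d)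
    (hdep : ∀ S ∈ (Finset.Icc 1 d).powerset,
      ∀ σ ∈ Orderings (Finset.Icc 1 d), ∀ σ' ∈ Orderings (Finset.Icc 1 d),
        σ.filter (fun a => decide (a ∈ S)) = σ'.filter (fun a => decide (a ∈ S)) →
          ω S σ = ω S σ') :
    (∑ S ∈ (Finset.Icc 1 d).powerset.filter (fun S => i ∈ S),
      ∑ σ ∈ Orderings (Finset.Icc 1 d),
        (((S.card - 1)! * (d - S.card)! : ℝ) / (d ! * d !)) *
          (ω S σ - ω (S.erase i) σ)) =
    ∑ S ∈ ((Finset.Icc 1 d).erase i).powerset, ∑ π ∈ Orderings (insert i S),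
      (((d - S.card - 1)! : ℝ) / (d ! * (S.card + 1))) *
        (ω π.toFinset (extendOrd d π) -
          ω (π.erase i).toFinset (extendOrd d (π.erase i))) := by
  refine Finset.sum_bij' (fun S _ => S.erase i) (fun S _ => insert i S) ?_ ?_ ?_ ?_ ?_
  · intro S hS
    simp only [Finset.mem_filter, Finset.mem_powerset] at hS
    rw [Finset.mem_powerset]
    exact Finset.erase_subset_erase _ hS.1
  · intro S hS
    rw [Finset.mem_powerset] at hS
    simp only [Finset.mem_filter, Finset.mem_powerset]
    exact ⟨Finset.insert_subset hi (hS.trans (Finset.erase_subset _ _)),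
      Finset.mem_insert_self _ _⟩
  · intro S hS
    simp only [Finset.mem_filter] at hS
    exact Finset.insert_erase hS.2
  · intro S hS
    rw [Finset.mem_powerset] at hS
    have hiS : i ∉ S := fun h => (Finset.notMem_erase i _) (hS h)
    exact Finset.erase_insert hiS
  · intro S hS
    simp only [Finset.mem_filter, Finset.mem_powerset] at hS
    obtain ⟨hSN, hiS⟩ := hS
    have hins : insert i (S.erase i) = S := Finset.insert_erase hiS
    have hcard : (S.erase i).card = S.card - 1 := Finset.card_erase_of_mem hiS
    have hpos : 1 ≤ S.card := Finset.card_pos.2 ⟨i, hiS⟩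
    have hcard' : (S.erase i).card + 1 = S.card := by omega
    rw [hins, hcard]
    -- now fiberwise decomposition
    rw [← Finset.sum_fiberwise_of_maps_to (filter_maps_to hSN)
      (fun σ => (((S.card - 1)! * (d - S.card)! : ℝ) / (d ! * d !)) *
        (ω S σ - ω (S.erase i) σ))]
    apply Finset.sum_congr rfl
    intro π hπ
    have hπ' := hπ
    rw [mem_orderings] at hπ'
    obtain ⟨hπn, hπt⟩ := hπ'
    have hπe_n : (π.erase i).Nodup := hπn.erase i
    have hπe_t : (π.erase i).toFinset = S.erase i := by
      ext x
      rw [List.mem_toFinset, List.Nodup.mem_erase_iff hπn, Finset.mem_erase,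
        ← hπt, List.mem_toFinset]
    have hext1 : extendOrd d π ∈ Orderings (Finset.Icc 1 d) :=
      extendOrd_mem hπn (hπt ▸ hSN)
    have hext2 : extendOrd d (π.erase i) ∈ Orderings (Finset.Icc 1 d) :=
      extendOrd_mem hπe_n (hπe_t ▸ (Finset.erase_subset _ _).trans hSN)
    have hef1 : (extendOrd d π).filter (fun a => decide (a ∈ S)) = π := by
      have := extendOrd_filter (d := d) π
      rwa [hπt] at this
    have hef2 : (extendOrd d (π.erase i)).filter (fun a => decide (a ∈ S.erase i))
        = π.erase i := by
      have := extendOrd_filter (d := d) (π.erase i)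
      rwa [hπe_t] at this
    have hconst : ∀ σ ∈ (Orderings (Finset.Icc 1 d)).filter
        (fun σ => σ.filter (fun a => decide (a ∈ S)) = π),
        (((S.card - 1)! * (d - S.card)! : ℝ) / (d ! * d !)) * (ω S σ - ω (S.erase i) σ) =
        (((S.card - 1)! * (d - S.card)! : ℝ) / (d ! * d !)) *
          (ω π.toFinset (extendOrd d π) - ω (π.erase i).toFinset (extendOrd d (π.erase i))) := by
      intro σ hσ
      rw [Finset.mem_filter] at hσ
      obtain ⟨hσO, hσf⟩ := hσ
      have h1 : ω S σ = ω π.toFinset (extendOrd d π) := by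
        rw [hπt]
        exact hdep S (Finset.mem_powerset.2 hSN) σ hσO (extendOrd d π) hext1
          (by rw [hσf, hef1])
      have hσfe : σ.filter (fun a => decide (a ∈ S.erase i)) = π.erase i := by
        have step1 : σ.filter (fun a => decide (a ∈ S.erase i)) =
            (σ.filter (fun a => decide (a ∈ S))).filter
              (fun a => decide (a ∈ S.erase i)) := by
          rw [List.filter_filter]
          apply List.filter_congr
          intro a _
          by_cases ha : a ∈ S.erase i
          · have : a ∈ S := (Finset.erase_subset _ _) ha
            simp [ha, this]
          · simp [ha]
        rw [step1, hσf]
        rw [List.Nodup.erase_eq_filter hπn]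
        apply List.filter_congr
        intro a haπ
        have haS : a ∈ S := hπt ▸ List.mem_toFinset.2 haπ
        by_cases hai : a = i
        · subst hai; simp
        · simp [Finset.mem_erase, hai, haS]
      have h2 : ω (S.erase i) σ = ω (π.erase i).toFinset (extendOrd d (π.erase i)) := by
        rw [hπe_t]
        exact hdep (S.erase i)
          (Finset.mem_powerset.2 ((Finset.erase_subset _ _).trans hSN)) σ hσO
          (extendOrd d (π.erase i)) hext2 (by rw [hσfe, hef2])
      rw [h1, h2]
    rw [Finset.sum_congr rfl hconst, Finset.sum_const, nsmul_eq_mul]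
    -- coefficient arithmetic
    have hNcard : (Finset.Icc 1 d).card = d := by
      rw [Nat.card_Icc]; omega
    have hfc := fiber_count hSN hπ
    rw [hNcard] at hfc
    set F := ((Orderings (Finset.Icc 1 d)).filter
      (fun σ => σ.filter (fun a => decide (a ∈ S)) = π)).card with hFdef
    have hfacpos : (0:ℝ) < d ! := by exact_mod_cast Nat.factorial_pos d
    have hspos : (0:ℝ) < (S.card : ℝ) := by exact_mod_cast hpos
    have hFr : (F : ℝ) * ((S.card :ℝ) * ((S.card - 1)! : ℝ)) = (d ! : ℝ) := by
      have h3 : F * (S.card * (S.card - 1)!) = d ! := by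
        rw [Nat.mul_factorial_pred (Nat.one_le_iff_ne_zero.1 hpos)]
        exact hfc
      exact_mod_cast h3
    have hd2 : d - (S.card - 1) - 1 = d - S.card := by omega
    rw [hd2]
    have hb : ((S.card - 1 : ℕ) : ℝ) + 1 = (S.card : ℝ) := by
      have : (S.card - 1) + 1 = S.card := by omega
      exact_mod_cast this
    rw [hb, ← mul_assoc]
    congr 1
    rw [mul_div_assoc', div_eq_div_iff (by positivity) (by positivity)]
    linear_combination (((d - S.card)! : ℝ) * (d ! : ℝ)) * hFr
end
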